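/- Let m ≥ 1 be an integer, q₀ = 2^m, q = 2q₀², and let F be a finite field with q⁴ elements. Then the number of pairs (α, β) ∈ F × F satisfying β^q + β = α^{q₀+q} + α^{q₀+1} and α^q ≠ α equals q⁴ + 2q₀q²(q−1) − q². -/

import Mathlib

open Finset Polynomial

section SuzukiAux

variable {F : Type*} [Field F]


variable {F : Type*} [Field F]

/-- trace from F_{q^4} to F_q -/
def Trq (q : ℕ) (x : F) : F := x + x ^ q + (x ^ q) ^ q + ((x ^ q) ^ q) ^ q

/-- the quadratic-type form G on v = α^q+α -/
def Gq (q₀ q : ℕ) (v : F) : F :=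
  v ^ q₀ * v + (v ^ q) ^ q₀ * (v + v ^ q) + ((v ^ q) ^ q) ^ q₀ * (v + v ^ q + (v ^ q) ^ q)

/-- v + v^{q²} -/
def tauq (q : ℕ) (v : F) : F := v + (v ^ q) ^ q

theorem char2_add_eq_zero (h2 : (2:F) = 0) (a b : F) : a + b = 0 ↔ a = b := by
  constructor
  · intro h; linear_combination h - b * h2
  · intro h; linear_combination h + b * h2

theorem trace_f_eq (q₀ q : ℕ) (h2 : (2:F) = 0)
    (hfq : ∀ x y : F, (x+y)^q = x^q + y^q)
    (hfq₀ : ∀ x y : F, (x+y)^q₀ = x^q₀ + y^q₀)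
    (α : F) (hα4 : (((α^q)^q)^q)^q = α) :
    Trq q (α^(q₀+q) + α^(q₀+1)) = Gq q₀ q (α^q + α) := by
  set a0 := α with ha0
  set a1 := α^q with ha1
  set a2 := a1^q with ha2
  set a3 := a2^q with ha3
  set b0 := α^q₀ with hb0
  set b1 := a1^q₀ with hb1
  set b2 := a2^q₀ with hb2
  set b3 := a3^q₀ with hb3
  have hf : α^(q₀+q) + α^(q₀+1) = b0*a1 + b0*a0 := by
    rw [pow_add, pow_add, pow_one]
  have hcomm : ∀ (x : F), (x^q₀)^q = (x^q)^q₀ := by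
    intro x; rw [← pow_mul, ← pow_mul, Nat.mul_comm]
  have hfq1 : (b0*a1 + b0*a0)^q = b1*a2 + b1*a1 := by
    rw [hfq, mul_pow, mul_pow, hb0, hcomm, ← ha1, ← hb1, ha2]
  have hfq2 : (b1*a2 + b1*a1)^q = b2*a3 + b2*a2 := by
    rw [hfq, mul_pow, mul_pow, hb1, hcomm, ← ha2, ← hb2, ha3]
  have hfq3 : (b2*a3 + b2*a2)^q = b3*a0 + b3*a3 := by
    rw [hfq, mul_pow, mul_pow, hb2, hcomm, ← ha3, ← hb3]
    have : a3^q = a0 := by rw [ha3, ha2, ha1, ha0]; exact hα4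
    rw [this]
  have hv : α^q + α = a1 + a0 := rfl
  have hvq : (a1+a0)^q = a2 + a1 := by rw [hfq, ← ha2]
  have hvq2 : (a2+a1)^q = a3 + a2 := by rw [hfq, ← ha3]
  have hvp : (a1+a0)^q₀ = b1 + b0 := by rw [hfq₀, ← hb1, hb0]
  have hvqp : (a2+a1)^q₀ = b2 + b1 := by rw [hfq₀, ← hb2, ← hb1]
  have hvq2p : (a3+a2)^q₀ = b3 + b2 := by rw [hfq₀, ← hb3, ← hb2]
  unfold Trq Gq
  rw [hf, hfq1, hfq2, hfq3, hv, hvq, hvq2, hvp, hvqp, hvq2p]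
  linear_combination (-(a2*b3) - a2*b2 - a1*b3 - 2*(a1*b2) - a1*b1 - a0*b2 - a0*b1) * h2

theorem trace_AS_eq_zero (q : ℕ) (h2 : (2:F) = 0)
    (hfq : ∀ x y : F, (x+y)^q = x^q + y^q)
    (α : F) (hα4 : (((α^q)^q)^q)^q = α) :
    Trq q (α^q + α) = 0 := by
  unfold Trq
  rw [hfq, hfq, hfq]
  rw [show (((α^q)^q)^q)^q = α from hα4]
  linear_combination (α + α^q + (α^q)^q + ((α^q)^q)^q) * h2

theorem trace_eq_tau (q : ℕ) (hfq : ∀ x y : F, (x+y)^q = x^q + y^q) (v : F) :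
    Trq q v = tauq q v + (tauq q v)^q := by
  unfold Trq tauq
  rw [hfq]
  ring

theorem G_of_fixed (q₀ q : ℕ) (h2 : (2:F) = 0)
    (hfq₀ : ∀ x y : F, (x+y)^q₀ = x^q₀ + y^q₀)
    (v : F) (hv : (v^q)^q = v) :
    Gq q₀ q v = (v + v^q)^(q₀+1) := by
  unfold Gq
  rw [hv, pow_succ, hfq₀]
  linear_combination (v^q₀*v) * h2

theorem G_smul (q₀ q : ℕ) (t v : F) (ht : t^q = t) :
    Gq q₀ q (t*v) = t^(q₀+1) * Gq q₀ q v := by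
  unfold Gq
  rw [mul_pow t v q, ht, mul_pow t (v^q) q, ht, mul_pow, mul_pow, mul_pow, pow_succ]
  ring

theorem tau_smul (q : ℕ) (t v : F) (ht : t^q = t) :
    tauq q (t*v) = t * tauq q v := by
  unfold tauq
  rw [mul_pow t v q, ht, mul_pow t (v^q) q, ht]
  ring







/-- ⊇ direction: each nontrivial r-th root of unity gives a solution -/
theorem root_is_solution (q₀ q k : ℕ) (hq₀k : q₀ = k + 1) (hq : q = 2 * q₀^2)
    (h2 : (2:F) = 0)
    (hfq : ∀ x y : F, (x+y)^q = x^q + y^q)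
    (hfq₀ : ∀ x y : F, (x+y)^q₀ = x^q₀ + y^q₀)
    (a : F) (har : a ^ (q + 2*q₀ + 1) = 1) (ha1 : a ≠ 1) :
    tauq q ((1+a)⁻¹) = 1 ∧ Gq q₀ q ((1+a)⁻¹) = 0 := by
  have hne1 : ∀ x : F, x ≠ 1 → (1:F) + x ≠ 0 := by
    intro x hx h
    apply hx
    have : (1:F) = x := by linear_combination h - x*h2
    exact this.symm
  have ha0 : a ≠ 0 := by
    intro h
    rw [h, zero_pow (by omega)] at har
    exact zero_ne_one har
  -- exponent facts
  have E1 : a^q * a^(2*q₀+1) = 1 := by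
    rw [← pow_add]; exact har
  have E2 : a^(q*q) * a = 1 := by
    have hnat : q*q + 1 = (q + 2*q₀ + 1) * (2*k*q₀ + 1) := by
      subst hq₀k; subst hq; ring
    calc a^(q*q) * a = a^(q*q+1) := by rw [pow_succ]
    _ = (a^(q+2*q₀+1))^(2*k*q₀+1) := by rw [← pow_mul, hnat]
    _ = 1 := by rw [har, one_pow]
  have E3 : a^(q*q₀) = a^(q₀+1) := by
    have hnat : q*q₀ = (q + 2*q₀ + 1) * k + (q₀+1) := by
      subst hq₀k; subst hq; ring
    rw [hnat, pow_add, pow_mul, har, one_pow, one_mul]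
  have E4 : a^(q*q*q₀) * a^q₀ = 1 := by
    have := congrArg (fun x : F => x ^ q₀) E2
    simpa [mul_pow, ← pow_mul, one_pow] using this
  -- non-vanishing facts
  have hq2ne : a^(q*q) ≠ 1 := by
    intro h; apply ha1
    calc a = a^(q*q) * a := by rw [h, one_mul]
    _ = 1 := E2
  have haqne : a^q ≠ 1 := by
    intro h; apply hq2ne
    rw [pow_mul, h, one_pow]
  have hbne : a^q₀ ≠ 1 := by
    intro h
    have haq : a^q = 1 := by
      have : q = q₀*q₀*2 := by rw [hq]; ring
      rw [this, pow_mul, pow_mul, h, one_pow, one_pow]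
    have h2q₀ : a^(2*q₀+1) = a := by
      have : 2*q₀+1 = q₀+q₀+1 := by ring
      rw [this, pow_add, pow_add, h, pow_one, one_mul, one_mul]
    apply ha1
    calc a = a^q * a^(2*q₀+1) := by rw [haq, h2q₀, one_mul]
    _ = 1 := E1
  have hcne : a^(q₀+1) ≠ 1 := by
    intro h
    apply ha1
    have h1 : a^(q+2*q₀) = 1 := by
      have : q + 2*q₀ = (q₀+1)*(2*q₀) := by rw [hq]; ring
      rw [this, pow_mul, h, one_pow]
    calc a = a^(q+2*q₀) * a := by rw [h1, one_mul]
    _ = a^(q+2*q₀+1) := by rw [pow_succ]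
    _ = 1 := har
  have hdne : a^(2*q₀+1) ≠ 1 := by
    intro h
    apply ha1
    have h1 : a^((2*q₀+1)*(2*q₀+1)) = 1 := by rw [pow_mul, h, one_pow]
    have h2r : a^(2*(q+2*q₀+1)) = 1 := by rw [pow_mul', har, one_pow]
    have hnat : 2*(q+2*q₀+1) = (2*q₀+1)*(2*q₀+1) + 1 := by rw [hq]; ring
    calc a = a^((2*q₀+1)*(2*q₀+1)) * a := by rw [h1, one_mul]
    _ = a^(2*(q+2*q₀+1)) := by rw [hnat, pow_succ]
    _ = 1 := h2r
  have hq3ne : a^(q*q*q₀) ≠ 1 := by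
    intro h
    apply hbne
    calc a^q₀ = a^(q*q*q₀) * a^q₀ := by rw [h, one_mul]
    _ = 1 := E4
  -- the element v
  set v : F := (1+a)⁻¹ with hv
  have f1 : (1+a) * v = 1 := mul_inv_cancel₀ (hne1 a ha1)
  have hvq0 : v^q₀ = (1 + a^q₀)⁻¹ := by
    rw [hv, inv_pow, hfq₀, one_pow]
  have f2 : (1 + a^q₀) * v^q₀ = 1 := by
    rw [hvq0]; exact mul_inv_cancel₀ (hne1 _ hbne)
  have hvq : v^q = (1 + a^q)⁻¹ := by
    rw [hv, inv_pow, hfq, one_pow]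
  have hvq1 : v^q * (1 + a^q) = 1 := by
    rw [hvq]; exact inv_mul_cancel₀ (hne1 _ haqne)
  have f4 : v^q * (1 + a^(2*q₀+1)) = a^(2*q₀+1) := by
    have key : (1 + a^(2*q₀+1)) = (1 + a^q) * a^(2*q₀+1) := by linear_combination -E1
    rw [key, ← mul_assoc, mul_comm (v^q) (1+a^q), mul_comm (1+a^q) (v^q)]
    rw [hvq1, one_mul]
  have hvq2 : (v^q)^q = (1 + a^(q*q))⁻¹ := by
    rw [hvq, inv_pow, hfq, one_pow, ← pow_mul]
  have f5 : (v^q)^q * (1+a) = a := by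
    have key : (1 + a) = (1 + a^(q*q)) * a := by linear_combination -E2
    rw [key, hvq2, ← mul_assoc, inv_mul_cancel₀ (hne1 _ hq2ne), one_mul]
  have f3 : (v^q)^q₀ * (1 + a^q₀ * a) = 1 := by
    have h1 : (v^q)^q₀ = (1 + a^q₀ * a)⁻¹ := by
      rw [hvq, inv_pow, hfq₀, one_pow, ← pow_mul, E3, pow_succ]
    rw [h1]
    exact inv_mul_cancel₀ (hne1 _ (by rw [← pow_succ]; exact hcne))
  have f6 : ((v^q)^q)^q₀ * (1 + a^q₀) = a^q₀ := by
    have h1 : ((v^q)^q)^q₀ = (1 + a^(q*q*q₀))⁻¹ := by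
      rw [hvq2, inv_pow, hfq₀, one_pow, ← pow_mul]
    have key : (1 + a^q₀) = (1 + a^(q*q*q₀)) * a^q₀ := by linear_combination -E4
    rw [h1, key, ← mul_assoc, inv_mul_cancel₀ (hne1 _ hq3ne), one_mul]
  constructor
  · -- tau = 1
    have htau : (tauq q v) * (1+a) = 1 * (1+a) := by
      unfold tauq
      linear_combination f1 + f5
    have := mul_right_cancel₀ (hne1 a ha1) htau
    rw [this]
  · -- G = 0
    set b : F := a^q₀ with hb
    have hd' : a^(2*q₀+1) = b^2*a := by
      rw [hb, ← pow_mul, ← pow_succ]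
      congr 1
      ring
    rw [hd'] at f4
    have hdne' : b^2*a ≠ 1 := by rw [← hd']; exact hdne
    have hcne' : b*a ≠ 1 := by
      rw [hb, ← pow_succ]; exact hcne
    set Pi : F := ((1+a)*(1+b))*((1+b*a)*(1+b^2*a)) with hPi
    have hT1 : (v^q₀ * v) * Pi = (1+b*a)*(1+b^2*a) := by
      rw [hPi]
      linear_combination ((1+b*a)*(1+b^2*a)*(1+b)*(v^q₀)) * f1 + ((1+b*a)*(1+b^2*a)) * f2
    have hT2a : (v+v^q)*((1+a)*(1+b^2*a)) = 1 + a*(b^2*a) := by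
      linear_combination (1+b^2*a)*f1 + (1+a)*f4 + (b^2*a)*h2
    have hT3a : (v+v^q+(v^q)^q)*((1+a)*(1+b^2*a)) = 1 + a := by
      linear_combination (1+b^2*a)*f1 + (1+a)*f4 + (1+b^2*a)*f5 + (b^2*a + a*(b^2*a))*h2
    have hG2 : ((v^q)^q₀*(v+v^q)) * Pi = (1+b)*(1+a*(b^2*a)) := by
      rw [hPi]
      linear_combination ((1+b)*((v+v^q)*((1+a)*(1+b^2*a))))*f3 + (1+b)*hT2a
    have hG3 : (((v^q)^q)^q₀*(v+v^q+(v^q)^q)) * Pi = b*((1+a)*(1+b*a)) := by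
      rw [hPi]
      linear_combination ((1+b*a)*((v+v^q+(v^q)^q)*((1+a)*(1+b^2*a))))*f6 + ((1+b*a)*b)*hT3a
    have hGP : Gq q₀ q v * Pi = 0 := by
      unfold Gq
      linear_combination hT1 + hG2 + hG3 +
        (1 + b + a*b + a*b^2 + a^2*b^2 + a^2*b^3)*h2
    have hPine : Pi ≠ 0 := by
      rw [hPi]
      exact mul_ne_zero (mul_ne_zero (hne1 a ha1) (hne1 b hbne))
        (mul_ne_zero (hne1 _ hcne') (hne1 _ hdne'))
    exact (mul_eq_zero.mp hGP).resolve_right hPine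







/-- forward direction: every solution comes from an r-th root of unity -/
theorem solution_to_root (q₀ q : ℕ) (hq₀pos : 1 ≤ q₀) (hq : q = 2 * q₀^2)
    (h2 : (2:F) = 0)
    (hfq : ∀ x y : F, (x+y)^q = x^q + y^q)
    (hfq₀ : ∀ x y : F, (x+y)^q₀ = x^q₀ + y^q₀)
    (v : F) (hτ : tauq q v = 1) (hG : Gq q₀ q v = 0) :
    v ≠ 0 ∧ (1 + v⁻¹) ^ (q + 2*q₀ + 1) = 1 ∧ (1 + v⁻¹) ≠ 1 := by
  have hqpos : q ≠ 0 := by rw [hq]; positivity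
  have hv0 : v ≠ 0 := by
    intro h
    rw [h] at hτ
    unfold tauq at hτ
    rw [zero_pow hqpos, zero_pow hqpos, add_zero] at hτ
    exact zero_ne_one hτ
  unfold tauq at hτ
  have hvq2 : (v^q)^q = v + 1 := by linear_combination hτ - v*h2
  set s : F := v + v^q with hs
  have hvq : v^q = v + s := by rw [hs]; linear_combination (-v)*h2
  have d1 : s^q = s + 1 := by
    rw [hs, hfq, hvq2]; ring
  have d2 : Gq q₀ q v = s^q₀*s + v^q₀ + v + s + 1 := by
    unfold Gq
    rw [hvq2, hvq, hfq₀ v s, hfq₀ v 1, one_pow]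
    linear_combination (v^q₀*s + v + v*(s^q₀) + 3*(v*v^q₀))*h2
  have hE : s^q₀*s + v^q₀ + v + s + 1 = 0 := by rw [← d2]; exact hG
  have hg : v^q₀ = v + (s^q₀*s + s + 1) := by
    linear_combination hE - (v + s^q₀*s + s + 1)*h2
  set gg : F := s^q₀*s + s + 1 with hgg
  have hf2 : ∀ x y : F, (x+y)^2 = x^2 + y^2 := by
    intro x y; linear_combination (x*y)*h2
  have hpow : ∀ x : F, ((x^q₀)^q₀)^2 = x^q := by
    intro x; rw [← pow_mul, ← pow_mul]
    congr 1
    rw [hq]; ring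
  have hq₀q₀ : (v^q₀)^q₀ = v + gg + gg^q₀ := by
    rw [hg, hfq₀, hg]
  have hsq' : ((s^q₀)^q₀)^2 = s + 1 := by rw [hpow, d1]
  have d4 : v + s = v^2 + gg^2 + (gg^q₀)^2 := by
    have h1 : v + s = ((v^q₀)^q₀)^2 := by rw [hpow, hvq]
    rw [h1, hq₀q₀, hf2 (v+gg) (gg^q₀), hf2 v gg]
  have d5 : (gg^q₀)^2 = s*(s^q₀)^2 + 1 := by
    have h1 : gg^q₀ = (s^q₀)^q₀*(s^q₀) + s^q₀ + 1 := by
      rw [hgg, hfq₀, hfq₀, one_pow, mul_pow]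
    rw [h1, hf2 ((s^q₀)^q₀*(s^q₀) + s^q₀) 1, hf2 ((s^q₀)^q₀*(s^q₀)) (s^q₀),
      mul_pow, hsq', one_pow]
    linear_combination ((s^q₀)^2)*h2
  have R1 : v^2 + v = s + gg^2 + s*(s^q₀)^2 + 1 := by
    linear_combination d4 + d5 + (v^2 - s)*h2
  have R2 : gg^2 = s*(s^q₀)^2*s + s^2 + 1 := by
    rw [hgg, hf2 (s^q₀*s + s) 1, hf2 (s^q₀*s) s, mul_pow, one_pow]
    ring
  have Phi : (v^q + 1) * (v^q₀+1)^2 * (v+1) = v^q * (v^q₀)^2 * v := by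
    rw [hvq, hg]
    linear_combination s*R1 + R2 +
      (1 + gg + s + s*(s*(s^q₀)^2) + s*gg + s*gg^2 + s^2 + 2*v + 3*(v*gg) + v*gg^2
        + v*s + 2*(v*s*gg) + 3*v^2 + 3*(v^2*gg) + v^2*s + 2*v^3)*h2
  refine ⟨hv0, ?_, ?_⟩
  · have hvinv : v * v⁻¹ = 1 := mul_inv_cancel₀ hv0
    have hζ : (1 + v⁻¹) = (v+1)*v⁻¹ := by linear_combination (-1 : F)*hvinv
    have expand : ∀ x : F, x^(q+2*q₀+1) = x^q * (x^q₀)^2 * x := by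
      intro x
      rw [pow_succ, pow_add, pow_mul']
    rw [expand, hζ]
    have h1 : ((v+1)*v⁻¹)^q = (v^q+1)*(v^q)⁻¹ := by
      rw [mul_pow, hfq, one_pow, inv_pow]
    have h0 : ((v+1)*v⁻¹)^q₀ = (v^q₀+1)*(v^q₀)⁻¹ := by
      rw [mul_pow, hfq₀, one_pow, inv_pow]
    rw [h1, h0]
    have hnz1 : v^q ≠ 0 := pow_ne_zero _ hv0
    have hnz0 : v^q₀ ≠ 0 := pow_ne_zero _ hv0
    calc (v^q+1)*(v^q)⁻¹ * ((v^q₀+1)*(v^q₀)⁻¹)^2 * ((v+1)*v⁻¹)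
        = ((v^q+1)*(v^q₀+1)^2*(v+1)) * ((v^q)⁻¹ * ((v^q₀)⁻¹)^2 * v⁻¹) := by ring
      _ = (v^q*(v^q₀)^2*v) * ((v^q)⁻¹ * ((v^q₀)⁻¹)^2 * v⁻¹) := by rw [Phi]
      _ = 1 := by field_simp
  · intro h
    have : v⁻¹ = 0 := by linear_combination h
    exact hv0 (inv_eq_zero.mp this)



variable [Fintype F] [DecidableEq F]

theorem card_le_natDegree (p : Polynomial F) (hp : p ≠ 0) (P : F → Prop) [DecidablePred P]
    (hP : ∀ x, P x → p.IsRoot x) : (univ.filter P).card ≤ p.natDegree := by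
  have h1 : univ.filter P ⊆ p.roots.toFinset := by
    intro x hx
    rw [Multiset.mem_toFinset, mem_roots']
    exact ⟨hp, hP x (mem_filter.mp hx).2⟩
  calc (univ.filter P).card ≤ p.roots.toFinset.card := Finset.card_le_card h1
    _ ≤ Multiset.card p.roots := Multiset.toFinset_card_le _
    _ ≤ p.natDegree := p.card_roots'

theorem card_pow_eq_self_le (k : ℕ) (hk : 2 ≤ k) :
    (univ.filter fun x : F => x ^ k = x).card ≤ k := by
  have hmon : (X ^ k - X : F[X]).Monic := by
    apply monic_X_pow_sub
    rw [degree_X]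
    exact_mod_cast (by omega : 1 < k)
  have hdeg : (X ^ k - X : F[X]).natDegree ≤ k := by
    calc (X ^ k - X : F[X]).natDegree ≤ max (X ^ k : F[X]).natDegree (X : F[X]).natDegree :=
      natDegree_sub_le _ _
    _ ≤ k := by
      apply max_le
      · rw [natDegree_X_pow]
      · rw [natDegree_X]; omega
  calc (univ.filter fun x : F => x ^ k = x).card ≤ (X ^ k - X : F[X]).natDegree := by
        apply card_le_natDegree _ hmon.ne_zero
        intro x hx
        simp [IsRoot, sub_eq_zero, hx]
    _ ≤ k := hdeg

theorem card_trace_zero_le (q : ℕ) (hq : 2 ≤ q) :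
    (univ.filter fun x : F => x + x^q + (x^q)^q + ((x^q)^q)^q = 0).card ≤ q*q*q := by
  have h1 : q < q*q := by nlinarith
  have h2 : q*q < q*q*q := by nlinarith
  set p : F[X] := X ^ (q*q*q) + (X ^ (q*q) + X ^ q + X) with hp
  have hdlow : (X ^ (q*q) + X ^ q + X : F[X]).degree ≤ (q*q : ℕ) := by
    refine le_trans (degree_add_le _ _) (max_le ?_ ?_)
    · refine le_trans (degree_add_le _ _) (max_le ?_ ?_)
      · rw [degree_X_pow]
      · rw [degree_X_pow]
        exact_mod_cast le_of_lt h1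
    · rw [degree_X]
      exact_mod_cast (by omega : 1 ≤ q*q)
  have hmon : p.Monic := by
    rw [hp]
    apply monic_X_pow_add
    exact lt_of_le_of_lt hdlow (by exact_mod_cast h2)
  have hdeg : p.natDegree ≤ q*q*q := by
    rw [hp]
    refine le_trans (natDegree_add_le _ _) (max_le ?_ ?_)
    · rw [natDegree_X_pow]
    · refine le_trans (natDegree_add_le _ _) (max_le ?_ ?_)
      · refine le_trans (natDegree_add_le _ _) (max_le ?_ ?_)
        · rw [natDegree_X_pow]; omega
        · rw [natDegree_X_pow]; omega
      · rw [natDegree_X]; omega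
  calc (univ.filter fun x : F => x + x^q + (x^q)^q + ((x^q)^q)^q = 0).card
      ≤ p.natDegree := by
        apply card_le_natDegree _ hmon.ne_zero
        intro x hx
        simp only [IsRoot, hp, eval_add, eval_pow, eval_X]
        rw [show x^(q*q) = (x^q)^q from pow_mul x q q,
          show x^(q*q*q) = ((x^q)^q)^q from by rw [pow_mul, pow_mul]]
        linear_combination hx
    _ ≤ q*q*q := hdeg

theorem card_ker_mul_card_image (φ : F →+ F) :
    (univ.filter fun x => φ x = 0).card * (univ.image ⇑φ).card = Fintype.card F := by
  have h1 := AddSubgroup.card_eq_card_quotient_mul_card_addSubgroup (φ.ker)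
  have e1 : Nat.card (F ⧸ φ.ker) = Nat.card φ.range :=
    Nat.card_congr (QuotientAddGroup.quotientKerEquivRange φ).toEquiv
  have e2 : Nat.card φ.ker = (univ.filter fun x => φ x = 0).card := by
    rw [Nat.card_congr (Equiv.subtypeEquivRight (fun x => φ.mem_ker))]
    rw [Nat.card_eq_fintype_card, Fintype.card_subtype]
  have e3 : Nat.card φ.range = (univ.image ⇑φ).card := by
    have heq : ∀ x : F, x ∈ φ.range ↔ x ∈ univ.image ⇑φ := by
      intro x
      rw [AddMonoidHom.mem_range, Finset.mem_image]
      constructor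
      · rintro ⟨y, hy⟩; exact ⟨y, mem_univ y, hy⟩
      · rintro ⟨y, _, hy⟩; exact ⟨y, hy⟩
    rw [Nat.card_congr (Equiv.subtypeEquivRight heq), Nat.card_eq_finsetCard]
  rw [e1, e2, e3] at h1
  rw [← Nat.card_eq_fintype_card, h1, mul_comm]

theorem card_fiber_eq (φ : F →+ F) (v : F) (hv : ∃ x, φ x = v) :
    (univ.filter fun x => φ x = v).card = (univ.filter fun x => φ x = 0).card := by
  obtain ⟨x₀, hx₀⟩ := hv
  apply Finset.card_bij' (fun x _ => x - x₀) (fun y _ => y + x₀)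
  · intro x hx
    simp only [mem_filter, mem_univ, true_and] at hx ⊢
    rw [map_sub, hx, hx₀, sub_self]
  · intro y hy
    simp only [mem_filter, mem_univ, true_and] at hy ⊢
    rw [map_add, hy, hx₀, zero_add]
  · intro x _; ring
  · intro y _; ring

theorem card_rth_roots (r : ℕ) (hr : 0 < r) (hdvd : r ∣ Fintype.card F - 1) :
    (univ.filter fun x : F => x ^ r = 1).card = r := by
  obtain ⟨g, hg⟩ := IsCyclic.exists_generator (α := Fˣ)
  have horder : orderOf g = Fintype.card F - 1 := by
    rw [orderOf_eq_card_of_forall_mem_zpowers hg, Nat.card_eq_fintype_card, Fintype.card_units]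
  obtain ⟨k, hk⟩ := hdvd
  have hcard1 : 0 < Fintype.card F - 1 := by
    have := Fintype.one_lt_card (α := F)
    omega
  have hkpos : 0 < k := by
    rcases Nat.eq_zero_or_pos k with h | h
    · rw [h, Nat.mul_zero] at hk; omega
    · exact h
  have hordpow : orderOf (g ^ k) = r := by
    rw [orderOf_pow, horder, hk, Nat.gcd_eq_right ⟨r, by ring⟩]
    rw [Nat.mul_comm]
    exact Nat.mul_div_cancel_left r hkpos
  have hprim : IsPrimitiveRoot ((g ^ k : Fˣ) : F) r := by
    rw [IsPrimitiveRoot.coe_units_iff, ← hordpow]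
    exact IsPrimitiveRoot.orderOf _
  have hfeq : (univ.filter fun x : F => x ^ r = 1) = nthRootsFinset r (1 : F) := by
    ext x
    rw [mem_nthRootsFinset hr, mem_filter]
    simp
  rw [hfeq, hprim.card_nthRootsFinset]


end SuzukiAux
theorem suzuki_code_length
    (m q₀ q : ℕ) (hm : 1 ≤ m) (hq₀ : q₀ = 2 ^ m) (hq : q = 2 * q₀ ^ 2)
    (F : Type*) [Field F] [Fintype F] (hF : Fintype.card F = q ^ 4) :
    Set.ncard {p : F × F | p.2 ^ q + p.2 = p.1 ^ (q₀ + q) + p.1 ^ (q₀ + 1) ∧ p.1 ^ q ≠ p.1}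
      = q ^ 4 + 2 * q₀ * q ^ 2 * (q - 1) - q ^ 2 := by
  classical
  have hq₀pos : 1 ≤ q₀ := by rw [hq₀]; exact Nat.one_le_two_pow
  have hq2 : 2 ≤ q := by rw [hq]; nlinarith
  have hqne : q ≠ 0 := by omega
  -- characteristic 2
  have hq2pow : q = 2 ^ (2*m+1) := by
    rw [hq, hq₀, ← pow_mul, ← pow_succ']
    congr 1
    ring
  have hcard2 : Fintype.card F = 2 ^ ((2*m+1)*4) := by
    rw [hF, hq2pow, ← pow_mul]
  haveI : CharP F (ringChar F) := ringChar.charP F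
  obtain ⟨n, hprime, hcard⟩ := FiniteField.card F (ringChar F)
  have hring2 : ringChar F = 2 := by
    have hdvd : ringChar F ∣ 2 ^ ((2*m+1)*4) := by
      rw [← hcard2, hcard]
      exact dvd_pow_self _ n.ne_zero
    have hd2 := Nat.Prime.dvd_of_dvd_pow hprime hdvd
    exact (Nat.prime_dvd_prime_iff_eq hprime Nat.prime_two).mp hd2
  haveI hchar : CharP F 2 := by rw [← hring2]; exact ringChar.charP F
  haveI : Fact (Nat.Prime 2) := ⟨Nat.prime_two⟩
  have h2 : (2 : F) = 0 := by exact_mod_cast CharP.cast_eq_zero F 2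
  have hfq₀ : ∀ x y : F, (x+y)^q₀ = x^q₀ + y^q₀ := by
    intro x y; rw [hq₀]; exact add_pow_char_pow x y 2 m
  have hfq : ∀ x y : F, (x+y)^q = x^q + y^q := by
    intro x y; rw [hq2pow]; exact add_pow_char_pow x y 2 (2*m+1)
  have hα4 : ∀ x : F, (((x^q)^q)^q)^q = x := by
    intro x
    rw [← pow_mul, ← pow_mul, ← pow_mul]
    rw [show q*(q*(q*q)) = Fintype.card F from by rw [hF]; ring]
    exact FiniteField.pow_card x
  -- the Artin-Schreier additive map
  set φ : F →+ F := { toFun := fun x => x^q + x,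
                      map_zero' := by show (0:F)^q + 0 = 0; rw [zero_pow hqne, add_zero],
                      map_add' := by
                        intro x y
                        show (x+y)^q + (x+y) = (x^q+x) + (y^q+y)
                        rw [hfq]; ring } with hφdef
  have hφ : ∀ x : F, φ x = x^q + x := fun _ => rfl
  set Kf := univ.filter (fun x : F => x^q = x) with hKf
  have hker : (univ.filter fun x : F => φ x = 0) = Kf := by
    ext x
    simp only [hKf, mem_filter, mem_univ, true_and, hφ]
    exact char2_add_eq_zero h2 _ _
  have hkerle : Kf.card ≤ q := by rw [hKf]; exact card_pow_eq_self_le q hq2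
  set Tf := univ.filter (fun x : F => Trq q x = 0) with hTf
  have hTrle : Tf.card ≤ q*q*q := by
    have h := card_trace_zero_le (F := F) q hq2
    have he : Tf = univ.filter (fun x : F => x + x^q + (x^q)^q + ((x^q)^q)^q = 0) := by
      ext x; rw [hTf]; simp only [mem_filter, mem_univ, true_and]; exact Iff.rfl
    rw [he]
    exact h
  have hsub : univ.image ⇑φ ⊆ Tf := by
    intro v hv
    obtain ⟨α, _, rfl⟩ := mem_image.mp hv
    rw [hTf, mem_filter]
    refine ⟨mem_univ _, ?_⟩
    rw [hφ]
    exact trace_AS_eq_zero q h2 hfq α (hα4 α)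
  have hprod : Kf.card * (univ.image ⇑φ).card = q^4 := by
    rw [← hker, card_ker_mul_card_image φ, hF]
  have himle : (univ.image ⇑φ).card ≤ q*q*q := le_trans (card_le_card hsub) hTrle
  have hq3pos : 0 < q*q*q := by positivity
  have hKfcard : Kf.card = q := by
    have hge : q ≤ Kf.card := by
      by_contra hlt
      push_neg at hlt
      have hlt2 : q^4 < q^4 := by
        calc q^4 = Kf.card * (univ.image ⇑φ).card := hprod.symm
          _ ≤ Kf.card * (q*q*q) := Nat.mul_le_mul_left _ himle
          _ < q * (q*q*q) := by
              exact (Nat.mul_lt_mul_right hq3pos).mpr hlt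
          _ = q^4 := by ring
      omega
    omega
  have himcard : (univ.image ⇑φ).card = q*q*q := by
    have h1 : q * (univ.image ⇑φ).card = q * (q*q*q) := by
      calc q * (univ.image ⇑φ).card = Kf.card * (univ.image ⇑φ).card := by rw [hKfcard]
        _ = q^4 := hprod
        _ = q * (q*q*q) := by ring
    exact Nat.eq_of_mul_eq_mul_left (by omega) h1
  have him : univ.image ⇑φ = Tf :=
    Finset.eq_of_subset_of_card_le hsub (by rw [himcard]; exact hTrle)
  -- beta fiber count
  have hbeta : ∀ c : F, (univ.filter fun β : F => β^q + β = c).card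
      = if Trq q c = 0 then q else 0 := by
    intro c
    split_ifs with hc
    · have hmem : c ∈ univ.image ⇑φ := by
        rw [him, hTf]; exact mem_filter.mpr ⟨mem_univ _, hc⟩
      obtain ⟨x, _, hx⟩ := mem_image.mp hmem
      have hcf := card_fiber_eq φ c ⟨x, hx⟩
      rw [hker, hKfcard] at hcf
      rw [show (univ.filter fun β : F => β^q + β = c) = (univ.filter fun β : F => φ β = c)
        from by ext β; simp [hφ]]
      exact hcf
    · rw [Finset.card_eq_zero, Finset.filter_eq_empty_iff]
      intro β _ hβ
      apply hc
      have hmem : c ∈ univ.image ⇑φ := mem_image.mpr ⟨β, mem_univ _, by rw [hφ]; exact hβ⟩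
      rw [him, hTf] at hmem
      exact (mem_filter.mp hmem).2
  -- the pair set
  set f : F → F := fun α => α^(q₀+q) + α^(q₀+1) with hfdef
  set Pf := univ.filter (fun p : F × F => p.2^q + p.2 = f p.1 ∧ p.1^q ≠ p.1) with hPf
  have hset : {p : F × F | p.2 ^ q + p.2 = p.1 ^ (q₀ + q) + p.1 ^ (q₀ + 1) ∧ p.1 ^ q ≠ p.1}
      = ↑Pf := by
    ext p; simp [hPf, hfdef]
  rw [hset, Set.ncard_coe_finset]
  set tA := univ.filter (fun α : F => α^q ≠ α) with htA
  have hfiber1 : Pf.card = ∑ α ∈ tA, (univ.filter fun β : F => β^q + β = f α).card := by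
    rw [Finset.card_eq_sum_card_fiberwise (f := Prod.fst) (t := tA)
      (fun p hp => by
        rw [hPf, mem_coe, mem_filter] at hp
        rw [htA, mem_coe, mem_filter]
        exact ⟨mem_univ _, hp.2.2⟩)]
    apply Finset.sum_congr rfl
    intro α hα
    rw [htA, mem_filter] at hα
    refine Finset.card_bij' (fun p _ => p.2) (fun β _ => (α, β)) ?_ ?_ ?_ ?_
    · intro p hp
      rw [mem_filter] at hp
      obtain ⟨hp1, hp2⟩ := hp
      subst hp2
      simp only [hPf, mem_filter] at hp1
      exact mem_filter.mpr ⟨mem_univ _, hp1.2.1⟩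
    · intro β hβ
      rw [mem_filter] at hβ
      refine mem_filter.mpr ⟨?_, rfl⟩
      simp only [hPf, mem_filter]
      exact ⟨mem_univ _, hβ.2, hα.2⟩
    · intro p hp
      rw [mem_filter] at hp
      obtain ⟨_, hp2⟩ := hp
      subst hp2
      rfl
    · intro β _
      rfl
  have hfiber3 : Pf.card = q * (tA.filter (fun α => Trq q (f α) = 0)).card := by
    rw [hfiber1]
    rw [Finset.sum_congr rfl (fun α _ => hbeta (f α))]
    rw [← Finset.sum_filter, Finset.sum_const, smul_eq_mul, mul_comm]
  set Nf := univ.filter (fun α : F => Trq q (f α) = 0) with hNf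
  have hKsubN : Kf ⊆ Nf := by
    intro α hα
    rw [hKf, mem_filter] at hα
    rw [hNf, mem_filter]
    refine ⟨mem_univ _, ?_⟩
    have hfα : f α = 0 := by
      show α^(q₀+q) + α^(q₀+1) = 0
      rw [pow_add, pow_add, pow_one, hα.2]
      linear_combination (α^q₀*α)*h2
    rw [hfα]
    simp [Trq, zero_pow hqne]
  have htAfilter : tA.filter (fun α => Trq q (f α) = 0) = Nf \ Kf := by
    ext α
    simp only [htA, hNf, hKf, filter_filter, mem_filter, mem_sdiff, mem_univ, true_and]
    tauto
  have hNcard : Pf.card = q * (Nf.card - Kf.card) := by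
    rw [hfiber3, htAfilter, card_sdiff_of_subset hKsubN]
  -- Step 2 : Nf.card = q * Mf.card
  have hGid : ∀ α : F, Trq q (f α) = Gq q₀ q (φ α) := by
    intro α
    rw [hφ]
    show Trq q (α^(q₀+q) + α^(q₀+1)) = _
    exact trace_f_eq q₀ q h2 hfq hfq₀ α (hα4 α)
  set Mf := univ.filter (fun v : F => Trq q v = 0 ∧ Gq q₀ q v = 0) with hMf
  have hNM : Nf.card = q * Mf.card := by
    have h1 : Nf = univ.filter (fun α => Gq q₀ q (φ α) = 0) := by
      ext α; simp [hNf, hGid]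
    rw [h1]
    rw [Finset.card_eq_sum_card_fiberwise (f := ⇑φ) (t := univ.image ⇑φ)
      (fun x _ => mem_image_of_mem _ (mem_univ x))]
    have h2' : ∀ v ∈ univ.image ⇑φ,
        ((univ.filter fun α => Gq q₀ q (φ α) = 0).filter fun α => φ α = v).card
          = if Gq q₀ q v = 0 then q else 0 := by
      intro v hv
      split_ifs with hGv
      · rw [show ((univ.filter fun α => Gq q₀ q (φ α) = 0).filter fun α => φ α = v)
            = univ.filter (fun α : F => φ α = v) from by
          ext α
          simp only [filter_filter, mem_filter, mem_univ, true_and]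
          constructor
          · tauto
          · intro h; exact ⟨by rw [h]; exact hGv, h⟩]
        obtain ⟨x, _, hx⟩ := mem_image.mp hv
        have hcf := card_fiber_eq φ v ⟨x, hx⟩
        rw [hker, hKfcard] at hcf
        exact hcf
      · rw [Finset.card_eq_zero, Finset.filter_eq_empty_iff]
        intro α hα h
        rw [mem_filter] at hα
        exact hGv (h ▸ hα.2)
    rw [Finset.sum_congr rfl h2']
    rw [← Finset.sum_filter, Finset.sum_const, smul_eq_mul, mul_comm]
    congr 1
    rw [him, hTf, hMf, filter_filter]
  -- Step 3 : strata
  have htau : ∀ v : F, Trq q v = 0 ↔ (tauq q v)^q = tauq q v := by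
    intro v
    rw [trace_eq_tau q hfq v, char2_add_eq_zero h2]
    exact eq_comm
  set S1f := univ.filter (fun v : F => tauq q v = 1 ∧ Gq q₀ q v = 0) with hS1f
  have hMsum : Mf.card
      = ∑ t ∈ Kf, (univ.filter (fun v : F => tauq q v = t ∧ Gq q₀ q v = 0)).card := by
    rw [Finset.card_eq_sum_card_fiberwise (f := tauq q) (t := Kf)
      (fun v hv => by
        rw [hMf, mem_coe, mem_filter] at hv
        rw [hKf, mem_coe, mem_filter]
        exact ⟨mem_univ _, (htau v).mp hv.2.1⟩)]
    apply Finset.sum_congr rfl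
    intro t ht
    congr 1
    ext v
    rw [hMf, filter_filter, mem_filter, mem_filter]
    simp only [mem_univ, true_and]
    constructor
    · rintro ⟨⟨_, hG⟩, hτ⟩; exact ⟨hτ, hG⟩
    · rintro ⟨hτ, hG⟩
      refine ⟨⟨?_, hG⟩, hτ⟩
      rw [htau v, hτ]
      exact (mem_filter.mp ht).2
  have hS0 : (univ.filter (fun v : F => tauq q v = 0 ∧ Gq q₀ q v = 0)) = Kf := by
    ext v
    simp only [mem_filter, mem_univ, true_and, hKf]
    constructor
    · rintro ⟨hτ, hG⟩
      have hfix : (v^q)^q = v := by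
        have hτ' : v + (v^q)^q = 0 := hτ
        exact ((char2_add_eq_zero h2 v ((v^q)^q)).mp hτ').symm
      rw [G_of_fixed q₀ q h2 hfq₀ v hfix] at hG
      have hvv := pow_eq_zero_iff (n := q₀+1) (by omega) |>.mp hG
      exact ((char2_add_eq_zero h2 v (v^q)).mp hvv).symm
    · intro hv
      constructor
      · show v + (v^q)^q = 0
        rw [hv, hv]
        linear_combination v*h2
      · rw [G_of_fixed q₀ q h2 hfq₀ v (by rw [hv, hv]), hv]
        rw [show v + v = 0 from by linear_combination v*h2]
        exact zero_pow (by omega)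
  have hSt : ∀ t ∈ Kf, t ≠ 0 →
      (univ.filter (fun v : F => tauq q v = t ∧ Gq q₀ q v = 0)).card = S1f.card := by
    intro t ht ht0
    have htq : t^q = t := by
      rw [hKf, mem_filter] at ht; exact ht.2
    have htinv : (t⁻¹)^q = t⁻¹ := by rw [inv_pow, htq]
    rw [hS1f]
    refine Finset.card_bij' (fun v _ => t⁻¹ * v) (fun v _ => t * v) ?_ ?_ ?_ ?_
    · intro v hv
      simp only [mem_filter, mem_univ, true_and] at hv ⊢
      constructor
      · rw [tau_smul q t⁻¹ v htinv, hv.1, inv_mul_cancel₀ ht0]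
      · rw [G_smul q₀ q t⁻¹ v htinv, hv.2, mul_zero]
    · intro v hv
      simp only [mem_filter, mem_univ, true_and] at hv ⊢
      constructor
      · rw [tau_smul q t v htq, hv.1, mul_one]
      · rw [G_smul q₀ q t v htq, hv.2, mul_zero]
    · intro v _
      field_simp
    · intro v _
      field_simp
  have h0K : (0:F) ∈ Kf := by
    rw [hKf, mem_filter]
    exact ⟨mem_univ _, by rw [zero_pow hqne]⟩
  have hMcard : Mf.card = q + (q - 1) * S1f.card := by
    rw [hMsum, Finset.sum_eq_sum_sdiff_singleton_add h0K]
    rw [hS0, hKfcard]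
    rw [Finset.sum_congr rfl (fun t ht => hSt t (mem_sdiff.mp ht).1
      (by simpa using (mem_sdiff.mp ht).2))]
    rw [Finset.sum_const, smul_eq_mul, card_sdiff_of_subset (by simpa using h0K), hKfcard,
      card_singleton]
    ring
  -- Step 4 : K1 = q + 2*q₀
  have hrpos : 0 < q + 2*q₀ + 1 := by omega
  have hdvd : (q + 2*q₀ + 1) ∣ Fintype.card F - 1 := by
    rw [hF]
    have hz : (q:ℤ)^4 - 1 = (q + 2*q₀ + 1 : ℕ) * ((2*(q₀:ℤ)^2 - 2*q₀ + 1) * ((q:ℤ)^2 - 1)) := by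
      rw [hq]
      push_cast
      ring
    have h1le : 1 ≤ q^4 := Nat.one_le_pow 4 q (by omega)
    rw [← Int.natCast_dvd_natCast, Nat.cast_sub h1le]
    exact ⟨_, by push_cast; exact_mod_cast hz⟩
  have hroots := card_rth_roots (F := F) (q + 2*q₀ + 1) hrpos hdvd
  obtain ⟨k0, hk0⟩ : ∃ k0, q₀ = k0 + 1 := ⟨q₀ - 1, by omega⟩
  have hK1eq : S1f.card = ((univ.filter fun x : F => x ^ (q + 2*q₀ + 1) = 1) \ {1}).card := by
    rw [hS1f]
    refine Finset.card_bij' (fun v _ => 1 + v⁻¹) (fun a _ => (1+a)⁻¹) ?_ ?_ ?_ ?_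
    · intro v hv
      rw [mem_filter] at hv
      obtain ⟨hv0, hroot, hne⟩ :=
        solution_to_root q₀ q hq₀pos hq h2 hfq hfq₀ v hv.2.1 hv.2.2
      rw [mem_sdiff, mem_filter, mem_singleton]
      exact ⟨⟨mem_univ _, hroot⟩, hne⟩
    · intro a ha
      rw [mem_sdiff, mem_filter, mem_singleton] at ha
      obtain ⟨⟨_, har⟩, hane⟩ := ha
      have hsol := root_is_solution q₀ q k0 hk0 hq h2 hfq hfq₀ a har hane
      rw [mem_filter]
      exact ⟨mem_univ _, hsol⟩
    · intro v hv
      rw [mem_filter] at hv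
      obtain ⟨hv0, _, _⟩ :=
        solution_to_root q₀ q hq₀pos hq h2 hfq hfq₀ v hv.2.1 hv.2.2
      have h1 : 1 + (1 + v⁻¹) = v⁻¹ := by linear_combination h2
      show (1 + (1 + v⁻¹))⁻¹ = v
      rw [h1, inv_inv]
    · intro a _
      show 1 + ((1+a)⁻¹)⁻¹ = a
      rw [inv_inv]
      linear_combination h2
  have hK1card : S1f.card = q + 2*q₀ := by
    rw [hK1eq, card_sdiff_of_subset (by simp), hroots, card_singleton]
    omega
  -- final arithmetic
  rw [hNcard, hNM, hKfcard, hMcard, hK1card]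
  have e1 : 1 ≤ q := by omega
  have e2 : q ≤ q * (q + (q-1)*(q+2*q₀)) :=
    Nat.le_mul_of_pos_right q (Nat.lt_of_lt_of_le (by omega) (Nat.le_add_right q _))
  have e3 : q^2 ≤ q^4 + 2*q₀*q^2*(q-1) := by
    have : q^2 ≤ q^4 := Nat.pow_le_pow_right (by omega) (by omega)
    omega
  zify [e1, e2, e3]
  ring
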